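/- Let d ∈ C²([0,T];ℝ^m) solve the Galerkin system d''_j + Σ_i B[w_i,w_j] d_i = 0 with B symmetric and the w_i orthonormal in L². Setting u_m(t) = Σ_i d_i(t) w_i, the discrete energy (1/2)‖u_m'(t)‖²_{L²} + (1/2)B[u_m(t),u_m(t)] is constant in t; consequently there exists C > 0 independent of m such that ‖u_m'(t)‖²_{L²} + ‖u_m(t)‖²_{H_0^1} ≤ C(‖u_m'(0)‖²_{L²} + ‖u_m(0)‖²_{H_0^1}) for all t ∈ [0,T]. -/

import Mathlib

open Real Set MeasureTheory intervalIntegral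

lemma aux_cs {L : ℝ} (hL : 0 < L) {g : ℝ → ℝ} (hg : ContinuousOn g (Icc 0 L))
    {x : ℝ} (hx : x ∈ Icc 0 L) :
    (∫ t in (0:ℝ)..x, g t) ^ 2 ≤ L * ∫ t in (0:ℝ)..L, (g t) ^ 2 := by
  have hg2 : ContinuousOn (fun t => (g t) ^ 2) (Icc 0 L) := hg.pow 2
  have hIg : ∀ y ∈ Icc (0:ℝ) L, IntervalIntegrable g volume 0 y := fun y hy =>
    (hg.mono (by rw [uIcc_of_le hy.1]; exact Icc_subset_Icc le_rfl hy.2)).intervalIntegrable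
  have hIg2 : ∀ y ∈ Icc (0:ℝ) L, IntervalIntegrable (fun t => (g t) ^ 2) volume 0 y := fun y hy =>
    (hg2.mono (by rw [uIcc_of_le hy.1]; exact Icc_subset_Icc le_rfl hy.2)).intervalIntegrable
  set A : ℝ → ℝ := fun y => ∫ t in (0:ℝ)..y, g t with hA
  set Bq : ℝ → ℝ := fun y => ∫ t in (0:ℝ)..y, (g t) ^ 2 with hB
  have hAc : ContinuousOn A (Icc 0 L) := by
    have := continuousOn_primitive_interval (a := (0:ℝ)) (b := L) (μ := volume)
      (f := g) (by rw [uIcc_of_le hL.le]; exact hg.integrableOn_Icc)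
    rwa [uIcc_of_le hL.le] at this
  have hBc : ContinuousOn Bq (Icc 0 L) := by
    have := continuousOn_primitive_interval (a := (0:ℝ)) (b := L) (μ := volume)
      (f := fun t => (g t) ^ 2) (by rw [uIcc_of_le hL.le]; exact hg2.integrableOn_Icc)
    rwa [uIcc_of_le hL.le] at this
  have hmono : MonotoneOn (fun y => y * Bq y - (A y) ^ 2) (Icc 0 L) := by
    apply monotoneOn_of_hasDerivWithinAt_nonneg (convex_Icc 0 L)
      (f' := fun y => (Bq y + y * (g y) ^ 2 - 2 * A y * g y))
    · exact (continuousOn_id.mul hBc).sub (hAc.pow 2)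
    · intro y hy
      rw [interior_Icc] at hy
      have hyI : y ∈ Icc (0:ℝ) L := Ioo_subset_Icc_self hy
      have hmem : Icc (0:ℝ) L ∈ nhds y := Icc_mem_nhds hy.1 hy.2
      have hgm : StronglyMeasurableAtFilter g (nhds y) volume :=
        AEStronglyMeasurable.stronglyMeasurableAtFilter_of_mem
          (hg.aestronglyMeasurable measurableSet_Icc) hmem
      have hg2m : StronglyMeasurableAtFilter (fun t => (g t) ^ 2) (nhds y) volume :=
        AEStronglyMeasurable.stronglyMeasurableAtFilter_of_mem
          (hg2.aestronglyMeasurable measurableSet_Icc) hmem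
      have hAy : HasDerivAt A (g y) y :=
        integral_hasDerivAt_right (hIg y hyI) hgm ((hg y hyI).continuousAt hmem)
      have hBy : HasDerivAt Bq ((g y) ^ 2) y :=
        integral_hasDerivAt_right (hIg2 y hyI) hg2m ((hg2 y hyI).continuousAt hmem)
      have : HasDerivAt (fun y => y * Bq y - (A y) ^ 2)
          (1 * Bq y + y * (g y) ^ 2 - (2 * A y ^ 1 * g y)) y :=
        ((hasDerivAt_id y).mul hBy).sub (hAy.pow 2)
      rw [interior_Icc]
      refine (this.hasDerivWithinAt).congr_deriv (by ring)
    · intro y hy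
      rw [interior_Icc] at hy
      have hyI : y ∈ Icc (0:ℝ) L := Ioo_subset_Icc_self hy
      have key : Bq y + y * (g y) ^ 2 - 2 * A y * g y
          = ∫ t in (0:ℝ)..y, (g t - g y) ^ 2 := by
        have h2 : IntervalIntegrable (fun t => (2 * g y) * g t) volume 0 y :=
          (hIg y hyI).const_mul _
        have e : ∀ t, (g t - g y) ^ 2 = (g t) ^ 2 - (2 * g y) * g t + (g y) ^ 2 := by
          intro t; ring
        rw [show (fun t => (g t - g y)^2) = fun t => (g t)^2 - (2*g y) * g t + (g y)^2 from
          funext e]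
        rw [intervalIntegral.integral_add (((hIg2 y hyI).sub h2)) intervalIntegrable_const,
          intervalIntegral.integral_sub (hIg2 y hyI) h2,
          intervalIntegral.integral_const_mul, intervalIntegral.integral_const]
        simp only [smul_eq_mul]
        ring
      rw [key]
      exact intervalIntegral.integral_nonneg hyI.1 (fun t _ => sq_nonneg _)
  have h0 : (0:ℝ) ∈ Icc (0:ℝ) L := ⟨le_rfl, hL.le⟩
  have hF := hmono h0 hx hx.1
  simp only [intervalIntegral.integral_same, hA, hB] at hF
  have hF' : (A x) ^ 2 ≤ x * Bq x := by
    have : (0:ℝ) ≤ x * Bq x - (A x)^2 := by simpa using hF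
    linarith
  have hBx_nonneg : 0 ≤ Bq x := intervalIntegral.integral_nonneg hx.1 (fun t _ => sq_nonneg _)
  have hBqmono : Bq x ≤ Bq L :=
    intervalIntegral.integral_mono_interval le_rfl hx.1 hx.2
      (Filter.Eventually.of_forall fun t => sq_nonneg _) (hIg2 L ⟨le_rfl.trans hL.le, le_rfl⟩)
  calc (A x)^2 ≤ x * Bq x := hF'
    _ ≤ L * Bq L := by nlinarith [hx.1, hx.2, hBx_nonneg]

lemma aux_expand {L : ℝ} (hL : 0 ≤ L) {m : ℕ} (f : Fin m → ℝ → ℝ)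
    (hf : ∀ i, ContinuousOn (f i) (Icc 0 L)) (c : Fin m → ℝ) :
    (∫ x in (0:ℝ)..L, (∑ i, c i * f i x) ^ 2)
      = ∑ i, ∑ j, c i * c j * ∫ x in (0:ℝ)..L, f i x * f j x := by
  have hint : ∀ i j : Fin m, IntervalIntegrable (fun x => f i x * f j x) volume 0 L := by
    intro i j
    exact (((hf i).mul (hf j)).mono (by rw [uIcc_of_le hL])).intervalIntegrable
  have hptwise : ∀ x, (∑ i, c i * f i x) ^ 2
      = ∑ i, ∑ j, c i * c j * (f i x * f j x) := by
    intro x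
    rw [sq, Finset.sum_mul_sum]
    exact Finset.sum_congr rfl fun i _ => Finset.sum_congr rfl fun j _ => by ring
  have hsum : ∀ i : Fin m,
      IntervalIntegrable (fun x => ∑ j, c i * c j * (f i x * f j x)) volume 0 L := by
    intro i
    have := IntervalIntegrable.sum (μ := volume) (a := (0:ℝ)) (b := L) Finset.univ
      (f := fun j => fun x => c i * c j * (f i x * f j x))
      (fun j _ => (hint i j).const_mul _)
    simpa [Finset.sum_fn] using this
  simp_rw [hptwise]
  rw [intervalIntegral.integral_finset_sum
    (f := fun i x => ∑ j, c i * c j * (f i x * f j x)) (fun i _ => hsum i)]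
  refine Finset.sum_congr rfl fun i _ => ?_
  rw [intervalIntegral.integral_finset_sum (fun j _ => (hint i j).const_mul _)]
  exact Finset.sum_congr rfl fun j _ => intervalIntegral.integral_const_mul _ _

lemma aux_expand_fin {m n : ℕ} (μ : ℕ → ℝ) (c : Fin m → ℝ) (v : Fin m → ℕ → ℝ) :
    ∑ k ∈ Finset.range n, μ k * (∑ i, c i * v i k) ^ 2
      = ∑ i, ∑ j, c i * c j * ∑ k ∈ Finset.range n, μ k * v i k * v j k := by
  simp_rw [sq, Finset.sum_mul_sum, Finset.mul_sum]
  rw [Finset.sum_comm]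
  refine Finset.sum_congr rfl fun i _ => ?_
  rw [Finset.sum_comm]
  exact Finset.sum_congr rfl fun j _ => Finset.sum_congr rfl fun k _ => by ring

/-- Energy conservation and the uniform (in `m`) a priori bound for the
Galerkin approximations `u_m(t) = Σᵢ dᵢ(t) wᵢ` of the string problem with
elastic supports: the discrete energy
`½‖u_m'(t)‖²_{L²} + ½B[u_m(t),u_m(t)]` is constant in `t`, and there is a
constant `C > 0` independent of `m` with
`‖u_m'(t)‖²_{L²} + ‖u_m(t)‖²_{H₀¹} ≤ C (‖u_m'(0)‖²_{L²} + ‖u_m(0)‖²_{H₀¹})`. -/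
theorem galerkin_energy_bound
    (L a T : ℝ) (hL : 0 < L) (ha : 0 < a) (hT : 0 < T)
    (n : ℕ) (β X : ℕ → ℝ) (hβ : ∀ k < n, 0 ≤ β k) (hX : ∀ k < n, X k ∈ Set.Ioo 0 L) :
    ∃ C > (0:ℝ), ∀ (m : ℕ) (w w' : Fin m → ℝ → ℝ) (d d' d'' : ℝ → Fin m → ℝ),
      (∀ i, ∀ x ∈ Set.Icc (0:ℝ) L, HasDerivAt (w i) (w' i x) x) →
      (∀ i, ContinuousOn (w' i) (Set.Icc 0 L)) →
      (∀ i, w i 0 = 0) → (∀ i, w i L = 0) →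
      (∀ i j, (∫ x in (0:ℝ)..L, w i x * w j x) = if i = j then 1 else 0) →
      (∀ j t, HasDerivAt (fun s => d s j) (d' t j) t) →
      (∀ j t, HasDerivAt (fun s => d' s j) (d'' t j) t) →
      (∀ t ∈ Set.Icc (0:ℝ) T, ∀ j, d'' t j +
        ∑ i, ((∫ x in (0:ℝ)..L, a ^ 2 * w' i x * w' j x) +
          ∑ k ∈ Finset.range n, L * β k * w i (X k) * w j (X k)) * d t i = 0) →
      ((∀ t₁ ∈ Set.Icc (0:ℝ) T, ∀ t₂ ∈ Set.Icc (0:ℝ) T,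
          (1/2) * (∫ x in (0:ℝ)..L, (∑ i, d' t₁ i * w i x) ^ 2) +
            (1/2) * ((∫ x in (0:ℝ)..L, a ^ 2 * (∑ i, d t₁ i * w' i x) ^ 2) +
              ∑ k ∈ Finset.range n, L * β k * (∑ i, d t₁ i * w i (X k)) ^ 2) =
          (1/2) * (∫ x in (0:ℝ)..L, (∑ i, d' t₂ i * w i x) ^ 2) +
            (1/2) * ((∫ x in (0:ℝ)..L, a ^ 2 * (∑ i, d t₂ i * w' i x) ^ 2) +
              ∑ k ∈ Finset.range n, L * β k * (∑ i, d t₂ i * w i (X k)) ^ 2)) ∧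
        ∀ t ∈ Set.Icc (0:ℝ) T,
          (∫ x in (0:ℝ)..L, (∑ i, d' t i * w i x) ^ 2) +
            ((∫ x in (0:ℝ)..L, (∑ i, d t i * w i x) ^ 2) +
              ∫ x in (0:ℝ)..L, (∑ i, d t i * w' i x) ^ 2) ≤
          C * ((∫ x in (0:ℝ)..L, (∑ i, d' 0 i * w i x) ^ 2) +
            ((∫ x in (0:ℝ)..L, (∑ i, d 0 i * w i x) ^ 2) +
              ∫ x in (0:ℝ)..L, (∑ i, d 0 i * w' i x) ^ 2))) := by
  have hβsum : (0:ℝ) ≤ ∑ k ∈ Finset.range n, L * β k :=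
    Finset.sum_nonneg fun k hk => mul_nonneg hL.le (hβ k (Finset.mem_range.mp hk))
  have ha2 : (0:ℝ) < a ^ 2 := by positivity
  refine ⟨((a ^ 2 + 1 + L ^ 2) * (1 + a ^ 2 + L * ∑ k ∈ Finset.range n, L * β k)) / a ^ 2,
    ?_, ?_⟩
  · apply div_pos (mul_pos (by positivity) (by nlinarith)) ha2
  intro m w w' d d' d'' hw hw'c hw0 hwL horth hd hd' hode
  have hwc : ∀ i, ContinuousOn (w i) (Icc 0 L) := fun i x hx =>
    (hw i x hx).continuousAt.continuousWithinAt
  set B : Fin m → Fin m → ℝ := fun i j =>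
    (∫ x in (0:ℝ)..L, a ^ 2 * w' i x * w' j x) +
      ∑ k ∈ Finset.range n, L * β k * w i (X k) * w j (X k) with hBdef
  have hodeB : ∀ t ∈ Icc (0:ℝ) T, ∀ j, d'' t j + ∑ i, B i j * d t i = 0 := hode
  have hpull : ∀ i j, (∫ x in (0:ℝ)..L, a ^ 2 * w' i x * w' j x)
      = a ^ 2 * ∫ x in (0:ℝ)..L, w' i x * w' j x := by
    intro i j
    rw [← intervalIntegral.integral_const_mul]
    exact intervalIntegral.integral_congr fun x _ => mul_assoc _ _ _
  have hB' : ∀ i j, B i j = a ^ 2 * (∫ x in (0:ℝ)..L, w' i x * w' j x) +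
      ∑ k ∈ Finset.range n, L * β k * w i (X k) * w j (X k) := by
    intro i j; rw [hBdef]; simp only; rw [hpull]
  have hBsymm : ∀ i j, B i j = B j i := by
    intro i j
    rw [hBdef]; simp only
    congr 1
    · exact intervalIntegral.integral_congr fun x _ => by ring
    · exact Finset.sum_congr rfl fun k _ => by ring
  have hOrth : ∀ c : Fin m → ℝ,
      (∫ x in (0:ℝ)..L, (∑ i, c i * w i x) ^ 2) = ∑ i, c i ^ 2 := by
    intro c
    rw [aux_expand hL.le w hwc c]
    simp [horth, mul_ite, mul_one, mul_zero, Finset.sum_ite_eq, sq]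
  have hQuad : ∀ c : Fin m → ℝ,
      (∫ x in (0:ℝ)..L, a ^ 2 * (∑ i, c i * w' i x) ^ 2) +
        ∑ k ∈ Finset.range n, L * β k * (∑ i, c i * w i (X k)) ^ 2
      = ∑ i, ∑ j, c i * c j * B i j := by
    intro c
    rw [intervalIntegral.integral_const_mul, aux_expand hL.le w' hw'c c,
      aux_expand_fin (fun k => L * β k) c (fun i k => w i (X k)),
      Finset.mul_sum, ← Finset.sum_add_distrib]
    refine Finset.sum_congr rfl fun i _ => ?_
    rw [Finset.mul_sum, ← Finset.sum_add_distrib]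
    refine Finset.sum_congr rfl fun j _ => ?_
    rw [hB' i j]
    ring
  -- energy and its conservation
  have hEderiv : ∀ t : ℝ, HasDerivAt
      (fun s => (∑ i, d' s i ^ 2) + ∑ i, ∑ j, d s i * d s j * B i j)
      ((∑ i, 2 * d' t i * d'' t i) +
        ∑ i, ∑ j, (d' t i * d t j + d t i * d' t j) * B i j) t := by
    intro t
    refine HasDerivAt.add (HasDerivAt.fun_sum fun i _ => ?_)
      (HasDerivAt.fun_sum fun i _ => HasDerivAt.fun_sum fun j _ =>
        ((hd i t).mul (hd j t)).mul_const (B i j))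
    have := (hd' i t).fun_pow 2
    convert this using 1
    · rfl
    push_cast
    ring
  have hEzero : ∀ t ∈ Icc (0:ℝ) T,
      (∑ i, 2 * d' t i * d'' t i) +
        ∑ i, ∑ j, (d' t i * d t j + d t i * d' t j) * B i j = 0 := by
    intro t ht
    have hodeT : ∀ j, d'' t j = -∑ i, B i j * d t i := fun j => by
      have := hodeB t ht j; linarith
    have hD' : ∑ i, ∑ j, d t i * d' t j * B i j
        = ∑ i, ∑ j, d' t i * d t j * B i j := by
      rw [Finset.sum_comm]
      exact Finset.sum_congr rfl fun x _ => Finset.sum_congr rfl fun y _ => by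
        rw [hBsymm y x]; ring
    have h1 : ∑ i, ∑ j, (d' t i * d t j + d t i * d' t j) * B i j
        = 2 * ∑ i, ∑ j, d' t i * d t j * B i j := by
      have hsplit : ∀ i : Fin m, ∑ j, (d' t i * d t j + d t i * d' t j) * B i j
          = (∑ j, d' t i * d t j * B i j) + ∑ j, d t i * d' t j * B i j := by
        intro i
        rw [← Finset.sum_add_distrib]
        exact Finset.sum_congr rfl fun j _ => by ring
      calc ∑ i, ∑ j, (d' t i * d t j + d t i * d' t j) * B i j
          = ∑ i, ((∑ j, d' t i * d t j * B i j) + ∑ j, d t i * d' t j * B i j) :=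
            Finset.sum_congr rfl fun i _ => hsplit i
        _ = (∑ i, ∑ j, d' t i * d t j * B i j) + ∑ i, ∑ j, d t i * d' t j * B i j :=
            Finset.sum_add_distrib
        _ = 2 * ∑ i, ∑ j, d' t i * d t j * B i j := by rw [hD']; ring
    have h2 : ∑ i, 2 * d' t i * d'' t i
        = -(2 * ∑ i, ∑ j, d' t i * d t j * B i j) := by
      have hterm : ∀ p : Fin m, 2 * d' t p * d'' t p
          = -(2 * ∑ j, d' t p * d t j * B p j) := by
        intro p
        rw [hodeT p]
        rw [mul_neg, neg_inj, Finset.mul_sum, Finset.mul_sum]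
        exact Finset.sum_congr rfl fun q _ => by rw [hBsymm q p]; ring
      calc ∑ i, 2 * d' t i * d'' t i
          = ∑ i, -(2 * ∑ j, d' t i * d t j * B i j) :=
            Finset.sum_congr rfl fun p _ => hterm p
        _ = -(∑ i, 2 * ∑ j, d' t i * d t j * B i j) := Finset.sum_neg_distrib _
        _ = -(2 * ∑ i, ∑ j, d' t i * d t j * B i j) := by rw [← Finset.mul_sum]
    rw [h1, h2]
    ring
  have hE0 : ∀ t ∈ Icc (0:ℝ) T,
      (∑ i, d' t i ^ 2) + (∑ i, ∑ j, d t i * d t j * B i j)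
        = (∑ i, d' 0 i ^ 2) + (∑ i, ∑ j, d 0 i * d 0 j * B i j) := by
    apply constant_of_has_deriv_right_zero
    · exact fun t _ => (hEderiv t).continuousAt.continuousWithinAt
    · intro t ht
      have h := hEderiv t
      rw [hEzero t ⟨ht.1, ht.2.le⟩] at h
      exact h.hasDerivWithinAt
  -- Poincaré-type bounds
  have hgc : ∀ τ : ℝ, ContinuousOn (fun x => ∑ i, d τ i * w' i x) (Icc 0 L) := by
    intro τ
    exact continuousOn_finset_sum _ fun i _ => continuousOn_const.mul (hw'c i)
  have huc : ∀ τ : ℝ, ContinuousOn (fun x => ∑ i, d τ i * w i x) (Icc 0 L) := by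
    intro τ
    exact continuousOn_finset_sum _ fun i _ => continuousOn_const.mul (hwc i)
  have hval : ∀ τ : ℝ, ∀ y ∈ Icc (0:ℝ) L,
      (∑ i, d τ i * w i y) = ∫ x in (0:ℝ)..y, ∑ i, d τ i * w' i x := by
    intro τ y hy
    have hderiv : ∀ x ∈ uIcc (0:ℝ) y,
        HasDerivAt (fun z => ∑ i, d τ i * w i z) (∑ i, d τ i * w' i x) x := by
      intro x hx
      rw [uIcc_of_le hy.1] at hx
      exact HasDerivAt.fun_sum fun i _ =>
        HasDerivAt.const_mul (d τ i) (hw i x ⟨hx.1, hx.2.trans hy.2⟩)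
    have hint : IntervalIntegrable (fun x => ∑ i, d τ i * w' i x) volume 0 y :=
      ((hgc τ).mono (by rw [uIcc_of_le hy.1]; exact Icc_subset_Icc le_rfl hy.2)).intervalIntegrable
    rw [intervalIntegral.integral_eq_sub_of_hasDerivAt hderiv hint]
    simp [hw0]
  have hpt : ∀ τ : ℝ, ∀ y ∈ Icc (0:ℝ) L, (∑ i, d τ i * w i y) ^ 2 ≤
      L * ∫ x in (0:ℝ)..L, (∑ i, d τ i * w' i x) ^ 2 := by
    intro τ y hy
    rw [hval τ y hy]
    exact aux_cs hL (hgc τ) hy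
  have hQnonneg : ∀ τ : ℝ, (0:ℝ) ≤ ∫ x in (0:ℝ)..L, (∑ i, d τ i * w' i x) ^ 2 :=
    fun τ => intervalIntegral.integral_nonneg hL.le fun x _ => sq_nonneg _
  have hRle : ∀ τ : ℝ, (∫ x in (0:ℝ)..L, (∑ i, d τ i * w i x) ^ 2) ≤
      L ^ 2 * ∫ x in (0:ℝ)..L, (∑ i, d τ i * w' i x) ^ 2 := by
    intro τ
    have h1 : (∫ x in (0:ℝ)..L, (∑ i, d τ i * w i x) ^ 2) ≤
        ∫ _ in (0:ℝ)..L, (L * ∫ x in (0:ℝ)..L, (∑ i, d τ i * w' i x) ^ 2) := by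
      apply intervalIntegral.integral_mono_on hL.le
      · exact (((huc τ).pow 2).mono (by rw [uIcc_of_le hL.le])).intervalIntegrable
      · exact intervalIntegrable_const
      · exact fun y hy => hpt τ y hy
    rw [intervalIntegral.integral_const, smul_eq_mul] at h1
    calc (∫ x in (0:ℝ)..L, (∑ i, d τ i * w i x) ^ 2) ≤ _ := h1
      _ = L ^ 2 * ∫ x in (0:ℝ)..L, (∑ i, d τ i * w' i x) ^ 2 := by ring
  have hSle : ∀ τ : ℝ, ∑ k ∈ Finset.range n, L * β k * (∑ i, d τ i * w i (X k)) ^ 2 ≤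
      (∑ k ∈ Finset.range n, L * β k) *
        (L * ∫ x in (0:ℝ)..L, (∑ i, d τ i * w' i x) ^ 2) := by
    intro τ
    rw [Finset.sum_mul]
    apply Finset.sum_le_sum
    intro k hk
    have hk' := Finset.mem_range.mp hk
    have hXk : X k ∈ Icc (0:ℝ) L := Ioo_subset_Icc_self (hX k hk')
    exact mul_le_mul_of_nonneg_left (hpt τ (X k) hXk)
      (mul_nonneg hL.le (hβ k hk'))
  have hSnonneg : ∀ τ : ℝ,
      (0:ℝ) ≤ ∑ k ∈ Finset.range n, L * β k * (∑ i, d τ i * w i (X k)) ^ 2 :=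
    fun τ => Finset.sum_nonneg fun k hk =>
      mul_nonneg (mul_nonneg hL.le (hβ k (Finset.mem_range.mp hk))) (sq_nonneg _)
  have hPnonneg : ∀ (c : Fin m → ℝ), (0:ℝ) ≤ ∑ i, c i ^ 2 :=
    fun c => Finset.sum_nonneg fun i _ => sq_nonneg _
  have hQB : ∀ τ : ℝ, ∑ i, ∑ j, d τ i * d τ j * B i j =
      a ^ 2 * (∫ x in (0:ℝ)..L, (∑ i, d τ i * w' i x) ^ 2) +
        ∑ k ∈ Finset.range n, L * β k * (∑ i, d τ i * w i (X k)) ^ 2 := by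
    intro τ
    rw [← hQuad (d τ), intervalIntegral.integral_const_mul]
  constructor
  · -- energy conservation statement
    intro t₁ ht₁ t₂ ht₂
    rw [hOrth (d' t₁), hOrth (d' t₂), hQuad (d t₁), hQuad (d t₂)]
    have h1 := hE0 t₁ ht₁
    have h2 := hE0 t₂ ht₂
    linarith
  · -- the a priori bound
    intro t ht
    rw [hOrth (d' t), hOrth (d t), hOrth (d' 0), hOrth (d 0)]
    set Qt := ∫ x in (0:ℝ)..L, (∑ i, d t i * w' i x) ^ 2 with hQt
    set Q0 := ∫ x in (0:ℝ)..L, (∑ i, d 0 i * w' i x) ^ 2 with hQ0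
    set St := ∑ k ∈ Finset.range n, L * β k * (∑ i, d t i * w i (X k)) ^ 2 with hSt
    set S0 := ∑ k ∈ Finset.range n, L * β k * (∑ i, d 0 i * w i (X k)) ^ 2 with hS0
    set Pt := ∑ i, d' t i ^ 2 with hPt
    set P0 := ∑ i, d' 0 i ^ 2 with hP0
    set Rt := ∑ i, d t i ^ 2 with hRt
    set R0 := ∑ i, d 0 i ^ 2 with hR0
    have keyE : Pt + (a ^ 2 * Qt + St) = P0 + (a ^ 2 * Q0 + S0) := by
      have h1 := hE0 t ht
      have h2 := hQB t
      have h3 := hQB 0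
      rw [h2, h3] at h1
      linarith
    have hRtle : Rt ≤ L ^ 2 * Qt := by
      have := hRle t
      rw [hOrth (d t)] at this
      exact this
    have hS0le : S0 ≤ (∑ k ∈ Finset.range n, L * β k) * (L * Q0) := hSle 0
    have hQtn : (0:ℝ) ≤ Qt := hQnonneg t
    have hQ0n : (0:ℝ) ≤ Q0 := hQnonneg 0
    have hStn : (0:ℝ) ≤ St := hSnonneg t
    have hS0n : (0:ℝ) ≤ S0 := hSnonneg 0
    have hPtn : (0:ℝ) ≤ Pt := hPnonneg _
    have hP0n : (0:ℝ) ≤ P0 := hPnonneg _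
    have hRtn : (0:ℝ) ≤ Rt := hPnonneg _
    have hR0n : (0:ℝ) ≤ R0 := hPnonneg _
    set Sβ := ∑ k ∈ Finset.range n, L * β k with hSβ
    have key1 : a ^ 2 * (Pt + (Rt + Qt)) ≤
        (a ^ 2 + 1 + L ^ 2) * (Pt + (a ^ 2 * Qt + St)) := by
      nlinarith [mul_le_mul_of_nonneg_left hRtle ha2.le, mul_nonneg ha2.le hQtn,
        mul_nonneg ha2.le hStn, mul_nonneg (sq_nonneg L) hPtn, mul_nonneg (sq_nonneg L) hStn,
        mul_nonneg (mul_nonneg ha2.le ha2.le) hQtn, mul_nonneg (sq_nonneg L) (mul_nonneg ha2.le hQtn),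
        mul_nonneg (sq_nonneg L) (mul_nonneg ha2.le hStn)]
    have key2 : P0 + (a ^ 2 * Q0 + S0) ≤
        (1 + a ^ 2 + L * Sβ) * (P0 + (R0 + Q0)) := by
      have hLS : (0:ℝ) ≤ L * Sβ := mul_nonneg hL.le hβsum
      nlinarith [hS0le, mul_nonneg hLS hQ0n, mul_nonneg hLS hP0n, mul_nonneg hLS hR0n,
        mul_nonneg ha2.le hP0n, mul_nonneg ha2.le hR0n]
    rw [div_mul_eq_mul_div, le_div_iff₀ ha2]
    calc (Pt + (Rt + Qt)) * a ^ 2 = a ^ 2 * (Pt + (Rt + Qt)) := by ring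
      _ ≤ (a ^ 2 + 1 + L ^ 2) * (Pt + (a ^ 2 * Qt + St)) := key1
      _ = (a ^ 2 + 1 + L ^ 2) * (P0 + (a ^ 2 * Q0 + S0)) := by rw [keyE]
      _ ≤ (a ^ 2 + 1 + L ^ 2) * ((1 + a ^ 2 + L * Sβ) * (P0 + (R0 + Q0))) :=
          mul_le_mul_of_nonneg_left key2 (by positivity)
      _ = (a ^ 2 + 1 + L ^ 2) * (1 + a ^ 2 + L * Sβ) * (P0 + (R0 + Q0)) := by ring
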